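/- Every element σ ≠ t of finite compositional order in 𝒩(F₂) has odd depth. More precisely, if σ = t + t^k + O(t^{k+1}) ∈ 𝒩(F₂) with k ≥ 2 odd (i.e., d(σ) = k − 1 is even), then σ^{∘2ⁿ} = t + t^{2ⁿ(k−1)+1} + O(t^{2ⁿ(k−1)+2}) for every n ≥ 1; in particular σ^{∘2ⁿ} ≠ t for all n, so σ is not of finite order. -/

import Mathlib

open PowerSeries

abbrev F2 := ZMod 2

/-- Composition of power series `σ ∘ τ` (substitution of `τ` into `σ`), valid when
`τ` has zero constant coefficient. -/
noncomputable def ngComp (σ τ : PowerSeries F2) : PowerSeries F2 :=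
  PowerSeries.mk fun k =>
    ∑ n ∈ Finset.range (k + 1), PowerSeries.coeff (R := F2) n σ * PowerSeries.coeff (R := F2) k (τ ^ n)

/-- `ngIter σ n = σ^{∘n}`, the `n`-fold compositional iterate. -/
noncomputable def ngIter (σ : PowerSeries F2) : ℕ → PowerSeries F2
  | 0 => PowerSeries.X
  | n + 1 => ngComp σ (ngIter σ n)

/-- Membership in the Nottingham group: `σ ≡ t (mod t²)`. -/
def IsNott (σ : PowerSeries F2) : Prop :=
  PowerSeries.coeff (R := F2) 0 σ = 0 ∧ PowerSeries.coeff (R := F2) 1 σ = 1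

/-- `σ` has compositional order `n`. -/
def NGOrder (σ : PowerSeries F2) (n : ℕ) : Prop :=
  ngIter σ n = PowerSeries.X ∧ ∀ m : ℕ, 0 < m → m < n → ngIter σ m ≠ PowerSeries.X

/-- `σ` has depth `m`, i.e. `ord_t (σ - t) = m + 1`. -/
def HasDepth (σ : PowerSeries F2) (m : ℕ) : Prop :=
  (∀ i < m + 1, PowerSeries.coeff (R := F2) i (σ - PowerSeries.X) = 0) ∧
    PowerSeries.coeff (R := F2) (m + 1) (σ - PowerSeries.X) ≠ 0

/-- Conjugacy in the Nottingham group. -/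
def NGConj (σ τ : PowerSeries F2) : Prop :=
  ∃ ψ : PowerSeries F2, IsNott ψ ∧ ngComp σ ψ = ngComp ψ τ

open Finset

namespace NG

lemma coeff_ngComp (σ τ : PowerSeries F2) (k : ℕ) :
    coeff (R := F2) k (ngComp σ τ) = ∑ n ∈ range (k+1), coeff (R := F2) n σ * coeff (R := F2) k (τ ^ n) := by
  simp [ngComp]

lemma coeff_pow_zero {τ : PowerSeries F2} (hτ : coeff (R := F2) 0 τ = 0) {n k : ℕ} (h : k < n) :
    coeff (R := F2) k (τ ^ n) = 0 := by
  have hX : (X : PowerSeries F2) ∣ τ := X_dvd_iff.mpr (by simpa using hτ)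
  exact X_pow_dvd_iff.mp (pow_dvd_pow_of_dvd hX n) k h

lemma coeff_ngComp' (σ : PowerSeries F2) {τ : PowerSeries F2} (hτ : coeff (R := F2) 0 τ = 0)
    {k N : ℕ} (h : k < N) :
    coeff (R := F2) k (ngComp σ τ) = ∑ n ∈ range N, coeff (R := F2) n σ * coeff (R := F2) k (τ ^ n) := by
  rw [coeff_ngComp]
  apply Finset.sum_subset
  · intro x hx; simp only [mem_range] at *; omega
  · intro x hx hx'
    simp only [mem_range] at hx hx'
    rw [coeff_pow_zero hτ (by omega), mul_zero]

lemma coeff_truncEval (σ τ : PowerSeries F2) (N k : ℕ) :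
    coeff (R := F2) k (Polynomial.eval₂ (C (R := F2)) τ (trunc N σ)) =
      ∑ n ∈ range N, coeff (R := F2) n σ * coeff (R := F2) k (τ ^ n) := by
  induction N with
  | zero => simp
  | succ N ih =>
    rw [trunc_succ, Polynomial.eval₂_add, Polynomial.eval₂_monomial, map_add, ih,
      Finset.sum_range_succ]
    congr 1
    rw [coeff_C_mul]

lemma coeff_eval_low {τ : PowerSeries F2} (hτ : coeff (R := F2) 0 τ = 0) {p : Polynomial F2} {N : ℕ}
    (hp : ∀ i < N, p.coeff i = 0) {k : ℕ} (hk : k < N) :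
    coeff (R := F2) k (Polynomial.eval₂ (C (R := F2)) τ p) = 0 := by
  rw [Polynomial.eval₂_eq_sum_range, map_sum]
  apply Finset.sum_eq_zero
  intro i _
  by_cases h : i < N
  · rw [hp i h]; simp
  · rw [coeff_C_mul, coeff_pow_zero hτ (by omega), mul_zero]

lemma coeff_eval_congr {τ : PowerSeries F2} (hτ : coeff (R := F2) 0 τ = 0) {p q : Polynomial F2} {N : ℕ}
    (hpq : ∀ i < N, p.coeff i = q.coeff i) {k : ℕ} (hk : k < N) :
    coeff (R := F2) k (Polynomial.eval₂ (C (R := F2)) τ p) = coeff (R := F2) k (Polynomial.eval₂ (C (R := F2)) τ q) := by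
  have h0 : coeff (R := F2) k (Polynomial.eval₂ (C (R := F2)) τ (p - q)) = 0 :=
    coeff_eval_low hτ (fun i hi => by simp [hpq i hi]) hk
  rw [Polynomial.eval₂_sub, map_sub, sub_eq_zero] at h0
  exact h0

lemma coeff_ngComp_eval (σ : PowerSeries F2) {τ : PowerSeries F2} (hτ : coeff (R := F2) 0 τ = 0)
    {k N : ℕ} (hk : k < N) :
    coeff (R := F2) k (ngComp σ τ) = coeff (R := F2) k (Polynomial.eval₂ (C (R := F2)) τ (trunc N σ)) := by
  rw [coeff_truncEval, coeff_ngComp' σ hτ hk]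

lemma ngComp_mul (f g : PowerSeries F2) {ρ : PowerSeries F2} (hρ : coeff (R := F2) 0 ρ = 0) :
    ngComp (f * g) ρ = ngComp f ρ * ngComp g ρ := by
  ext k
  rw [coeff_ngComp_eval (f*g) hρ (Nat.lt_succ_self k)]
  rw [coeff_eval_congr hρ (N := k+1) (q := trunc (k+1) f * trunc (k+1) g) ?_ (Nat.lt_succ_self k)]
  · rw [Polynomial.eval₂_mul, PowerSeries.coeff_mul, PowerSeries.coeff_mul]
    apply Finset.sum_congr rfl
    intro p hp
    have hp' := Finset.HasAntidiagonal.mem_antidiagonal.mp hp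
    rw [← coeff_ngComp_eval f hρ (show p.1 < k+1 by omega),
      ← coeff_ngComp_eval g hρ (show p.2 < k+1 by omega)]
  · intro i hi
    rw [coeff_trunc, if_pos hi, PowerSeries.coeff_mul, Polynomial.coeff_mul]
    apply Finset.sum_congr rfl
    intro p hp
    have hp' := Finset.HasAntidiagonal.mem_antidiagonal.mp hp
    rw [coeff_trunc, coeff_trunc, if_pos (by omega), if_pos (by omega)]

lemma ngComp_one (ρ : PowerSeries F2) : ngComp 1 ρ = 1 := by
  ext k
  rw [coeff_ngComp]
  rw [Finset.sum_eq_single 0]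
  · simp
  · intro n _ hn
    rw [show (coeff (R := F2) n) (1 : PowerSeries F2) = 0 by
      simpa [coeff_one] using fun h => absurd h hn, zero_mul]
  · simp

lemma ngComp_pow (f : PowerSeries F2) {ρ : PowerSeries F2} (hρ : coeff (R := F2) 0 ρ = 0) (m : ℕ) :
    ngComp (f ^ m) ρ = (ngComp f ρ) ^ m := by
  induction m with
  | zero => simpa using ngComp_one ρ
  | succ m ih => rw [pow_succ, pow_succ, ngComp_mul _ _ hρ, ih]

lemma ngComp_X (σ : PowerSeries F2) : ngComp σ X = σ := by
  ext k
  rw [coeff_ngComp]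
  rw [Finset.sum_eq_single k]
  · simp [coeff_X_pow]
  · intro n _ hn
    rw [coeff_X_pow, if_neg (fun h => hn h.symm), mul_zero]
  · simp

lemma X_ngComp {τ : PowerSeries F2} (hτ : coeff (R := F2) 0 τ = 0) : ngComp X τ = τ := by
  ext k
  rw [coeff_ngComp]
  rcases Nat.eq_zero_or_pos k with rfl | hk
  · simpa [coeff_X] using hτ.symm
  · rw [Finset.sum_eq_single 1]
    · simp [coeff_X]
    · intro n _ hn
      rw [coeff_X, if_neg hn, zero_mul]
    · intro h; simp only [mem_range] at h; omega

lemma coeff_zero_ngComp (σ τ : PowerSeries F2) : coeff (R := F2) 0 (ngComp σ τ) = coeff (R := F2) 0 σ := by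
  rw [coeff_ngComp]; simp

lemma ngComp_assoc (σ : PowerSeries F2) {τ ρ : PowerSeries F2}
    (hτ : coeff (R := F2) 0 τ = 0) (hρ : coeff (R := F2) 0 ρ = 0) :
    ngComp (ngComp σ τ) ρ = ngComp σ (ngComp τ ρ) := by
  have hτρ : coeff (R := F2) 0 (ngComp τ ρ) = 0 := by rw [coeff_zero_ngComp]; exact hτ
  ext k
  rw [coeff_ngComp' (ngComp σ τ) hρ (Nat.lt_succ_self k),
    coeff_ngComp' σ hτρ (Nat.lt_succ_self k)]
  have step1 : ∀ n ∈ range (k+1), coeff (R := F2) n (ngComp σ τ) * coeff (R := F2) k (ρ^n)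
      = ∑ m ∈ range (k+1), coeff (R := F2) m σ * (coeff (R := F2) n (τ^m) * coeff (R := F2) k (ρ^n)) := by
    intro n hn
    rw [coeff_ngComp' σ hτ (mem_range.mp hn), Finset.sum_mul]
    simp [mul_assoc]
  rw [Finset.sum_congr rfl step1, Finset.sum_comm]
  apply Finset.sum_congr rfl
  intro m _
  rw [← Finset.mul_sum]
  congr 1
  rw [← coeff_ngComp' (τ^m) hρ (Nat.lt_succ_self k), ngComp_pow τ hρ m]

lemma coeff_zero_ngIter {σ : PowerSeries F2} (hσ : coeff (R := F2) 0 σ = 0) (n : ℕ) :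
    coeff (R := F2) 0 (ngIter σ n) = 0 := by
  induction n with
  | zero => simp [ngIter, coeff_X]
  | succ n ih => rw [ngIter, coeff_zero_ngComp]; exact hσ

lemma ngIter_add {σ : PowerSeries F2} (hσ : coeff (R := F2) 0 σ = 0) (m n : ℕ) :
    ngIter σ (m + n) = ngComp (ngIter σ m) (ngIter σ n) := by
  induction m with
  | zero => simpa [ngIter] using (X_ngComp (coeff_zero_ngIter hσ n)).symm
  | succ m ih =>
    have : m + 1 + n = (m + n) + 1 := by omega
    rw [this, ngIter, ih, ngIter,
      ngComp_assoc σ (coeff_zero_ngIter hσ m) (coeff_zero_ngIter hσ n)]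



def Shape (σ : PowerSeries F2) (k : ℕ) : Prop :=
  coeff (R := F2) 0 σ = 0 ∧ coeff (R := F2) 1 σ = 1 ∧
    (∀ i, 1 < i → i < k → coeff (R := F2) i σ = 0) ∧ coeff (R := F2) k σ = 1

section ShapeLemmas

variable {σ : PowerSeries F2} {k : ℕ}

lemma powLow (hσ : Shape σ k) {n m : ℕ} (h : m < n) : coeff (R := F2) m (σ ^ n) = 0 :=
  coeff_pow_zero hσ.1 h

lemma powDiag (hσ : Shape σ k) (n : ℕ) : coeff (R := F2) n (σ ^ n) = 1 := by
  induction n with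
  | zero => simp
  | succ n ih =>
    rw [pow_succ, PowerSeries.coeff_mul]
    rw [Finset.sum_eq_single (n, 1)]
    · rw [ih, hσ.2.1, one_mul]
    · rintro ⟨a, b⟩ hab hne
      have hab' := Finset.HasAntidiagonal.mem_antidiagonal.mp hab
      rcases Nat.lt_or_ge b 2 with hb | hb
      · interval_cases b
        · rw [hσ.1, mul_zero]
        · have ha : a = n := by omega
          subst ha
          exact (hne rfl).elim
      · rw [powLow hσ (show a < n by omega), zero_mul]
    · intro h
      exact absurd (Finset.HasAntidiagonal.mem_antidiagonal.mpr (by omega)) h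

lemma powMid (hσ : Shape σ k) (hk : 2 ≤ k) :
    ∀ n m : ℕ, n < m → m < n + k - 1 → coeff (R := F2) m (σ ^ n) = 0 := by
  intro n
  induction n with
  | zero => intro m h1 _; simpa using (by omega : ¬ m = 0)
  | succ n ih =>
    intro m h1 h2
    rw [pow_succ, PowerSeries.coeff_mul]
    apply Finset.sum_eq_zero
    rintro ⟨a, b⟩ hab
    have hab' := Finset.HasAntidiagonal.mem_antidiagonal.mp hab
    rcases Nat.lt_or_ge b 1 with hb | hb
    · rw [show b = 0 by omega, hσ.1, mul_zero]
    rcases Nat.lt_or_ge b 2 with hb2 | hb2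
    · rw [ih a (by omega) (by omega), zero_mul]
    rcases Nat.lt_or_ge b k with hbk | hbk
    · rw [hσ.2.2.1 b (by omega) hbk, mul_zero]
    · rw [powLow hσ (show a < n by omega), zero_mul]

lemma powHigh (hσ : Shape σ k) (hk : 2 ≤ k) :
    ∀ n : ℕ, coeff (R := F2) (n + k - 1) (σ ^ n) = (n : F2) := by
  intro n
  induction n with
  | zero => simpa using (by omega : ¬ k - 1 = 0)
  | succ n ih =>
    rw [pow_succ, PowerSeries.coeff_mul]
    rw [Finset.sum_eq_add_of_mem (n + k - 1, 1) (n, k)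
      (Finset.HasAntidiagonal.mem_antidiagonal.mpr (by omega)) (Finset.HasAntidiagonal.mem_antidiagonal.mpr (by omega))
      (by simp [Prod.ext_iff]; omega)]
    · rw [ih, hσ.2.1, powDiag hσ, hσ.2.2.2, mul_one, one_mul]
      push_cast
      ring
    · rintro ⟨a, b⟩ hab ⟨hne1, hne2⟩
      have hab' := Finset.HasAntidiagonal.mem_antidiagonal.mp hab
      rcases Nat.lt_or_ge b 1 with hb | hb
      · rw [show b = 0 by omega, hσ.1, mul_zero]
      rcases Nat.lt_or_ge b 2 with hb2 | hb2
      · have hb1 : b = 1 := by omega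
        have ha : a = n + k - 1 := by omega
        subst hb1; subst ha
        exact (hne1 rfl).elim
      rcases Nat.lt_or_ge b k with hbk | hbk
      · rw [hσ.2.2.1 b (by omega) hbk, mul_zero]
      rcases Nat.lt_or_ge b (k+1) with hbk1 | hbk1
      · have hb1 : b = k := by omega
        have ha : a = n := by omega
        subst hb1; subst ha
        exact (hne2 rfl).elim
      · rw [powLow hσ (show a < n by omega), zero_mul]

end ShapeLemmas



lemma F2_add_self : ∀ a : F2, a + a = 0 := by decide
lemma F2_aba : ∀ a b : F2, a + (b + a) = b := by decide

lemma doubling {σ : PowerSeries F2} {k : ℕ} (hσ : Shape σ k) (hk : 2 ≤ k) (hko : Odd k) :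
    Shape (ngComp σ σ) (2 * k - 1) := by
  have hkF : (k : F2) = 1 := by
    obtain ⟨j, rfl⟩ := hko
    push_cast
    ring_nf
    rw [show ((2:F2)) = 0 by decide]
    ring
  refine ⟨?_, ?_, ?_, ?_⟩
  · rw [coeff_zero_ngComp]; exact hσ.1
  · rw [coeff_ngComp]
    rw [Finset.sum_range_succ, Finset.sum_range_one]
    simp only [pow_zero, pow_one]
    rw [hσ.1, hσ.2.1, PowerSeries.coeff_one]
    simp
  · intro i hi1 hi2
    rw [coeff_ngComp]
    rcases Nat.lt_or_ge i k with hik | hik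
    · -- 1 < i < k : all terms vanish
      apply Finset.sum_eq_zero
      intro n hn
      rw [Finset.mem_range] at hn
      rcases Nat.eq_zero_or_pos n with rfl | hn0
      · rw [hσ.1, zero_mul]
      rcases Nat.lt_or_ge n 2 with hn1 | hn2
      · rw [show n = 1 by omega, pow_one, hσ.2.2.1 i hi1 hik, mul_zero]
      · rw [hσ.2.2.1 n (by omega) (by omega), zero_mul]
    rcases Nat.eq_or_lt_of_le hik with rfl | hik'
    · -- i = k
      rw [Finset.sum_eq_add_of_mem 1 k (Finset.mem_range.mpr (by omega))
        (Finset.mem_range.mpr (by omega)) (by omega)]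
      · simp only [pow_one, hσ.2.1, hσ.2.2.2, powDiag hσ, one_mul, mul_one]
        decide
      · intro n hn ⟨hn1, hni⟩
        rw [Finset.mem_range] at hn
        rcases Nat.eq_zero_or_pos n with rfl | hn0
        · rw [hσ.1, zero_mul]
        · rw [hσ.2.2.1 n (by omega) (by omega), zero_mul]
    · -- k < i < 2k-1
      rw [Finset.sum_eq_add_of_mem 1 i (Finset.mem_range.mpr (by omega))
        (Finset.mem_range.mpr (by omega)) (by omega)]
      · simp only [pow_one, hσ.2.1, powDiag hσ, one_mul, mul_one]
        exact F2_add_self _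
      · intro n hn ⟨hn1, hni⟩
        rw [Finset.mem_range] at hn
        rcases Nat.eq_zero_or_pos n with rfl | hn0
        · rw [hσ.1, zero_mul]
        rcases Nat.lt_or_ge n k with hnk | hnk
        · rw [hσ.2.2.1 n (by omega) hnk, zero_mul]
        · rw [powMid hσ hk n i (by omega) (by omega), mul_zero]
  · rw [coeff_ngComp]
    have hsub : ({1, k, 2*k-1} : Finset ℕ) ⊆ Finset.range (2*k-1+1) := by
      intro x hx
      simp only [Finset.mem_insert, Finset.mem_singleton] at hx
      rw [Finset.mem_range]
      rcases hx with rfl | rfl | rfl <;> omega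
    rw [← Finset.sum_subset hsub]
    · rw [Finset.sum_insert (by simp; omega), Finset.sum_insert (by simp; omega),
        Finset.sum_singleton]
      rw [show 2*k-1 = k + k - 1 by omega]
      simp only [pow_one, hσ.2.1, hσ.2.2.2, powDiag hσ, powHigh hσ hk, hkF,
        one_mul, mul_one]
      exact F2_aba _ 1
    · intro n hn hn'
      rw [Finset.mem_range] at hn
      simp only [Finset.mem_insert, Finset.mem_singleton] at hn'
      push_neg at hn'
      obtain ⟨hn1, hnk, hnK⟩ := hn'
      rcases Nat.eq_zero_or_pos n with rfl | hn0
      · rw [hσ.1, zero_mul]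
      rcases Nat.lt_or_ge n k with hnk' | hnk''
      · rw [hσ.2.2.1 n (by omega) hnk', zero_mul]
      · rw [powMid hσ hk n (2*k-1) (by omega) (by omega), mul_zero]



lemma shape_iter {σ : PowerSeries F2} {k : ℕ} (hσ : Shape σ k) (hk : 2 ≤ k) (hko : Odd k)
    (n : ℕ) : Shape (ngIter σ (2 ^ n)) (2 ^ n * (k - 1) + 1) := by
  induction n with
  | zero =>
    have h1 : ngIter σ 1 = σ := by
      show ngComp σ (ngIter σ 0) = σ
      show ngComp σ X = σ
      exact ngComp_X σ
    rw [pow_zero, h1, one_mul, show k - 1 + 1 = k by omega]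
    exact hσ
  | succ n ih =>
    have h2 : (2:ℕ) ^ (n+1) = 2 ^ n + 2 ^ n := by ring
    rw [h2, ngIter_add hσ.1]
    have hK2 : 2 ≤ 2 ^ n * (k - 1) + 1 := by
      have : 1 ≤ 2 ^ n := Nat.one_le_two_pow
      have : 1 ≤ k - 1 := by omega
      nlinarith [Nat.one_le_two_pow (n := n)]
    have hKo : Odd (2 ^ n * (k - 1) + 1) := by
      obtain ⟨j, hj⟩ := hko
      refine ⟨2 ^ n * j, ?_⟩
      rw [show k - 1 = 2 * j by omega]
      ring
    have := doubling ih hK2 hKo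
    have heq : 2 * (2 ^ n * (k - 1) + 1) - 1 = 2 ^ n * 2 * (k - 1) + 1 := by
      have h : 2 ^ n * 2 * (k - 1) = 2 * (2 ^ n * (k - 1)) := by ring
      have h1 : 1 ≤ 2 ^ n := Nat.one_le_two_pow
      have h2' : 1 ≤ k - 1 := by omega
      have h3 : 1 ≤ 2 ^ n * (k-1) := Nat.one_le_iff_ne_zero.mpr (by positivity)
      omega
    rw [heq] at this
    rw [show (2^n + 2^n) * (k-1) + 1 = 2^n*2*(k-1)+1 by ring]
    exact this

lemma ngIter_mul_X {σ : PowerSeries F2} (hσ : coeff (R := F2) 0 σ = 0) {N : ℕ}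
    (hN : ngIter σ N = X) (c : ℕ) : ngIter σ (N * c) = X := by
  induction c with
  | zero => rfl
  | succ c ih =>
    rw [show N * (c + 1) = N * c + N by ring, ngIter_add hσ, ih, hN,
      X_ngComp (by simp [coeff_X])]

lemma no_finite_order {σ : PowerSeries F2} {k : ℕ} (hσ : Shape σ k) (hk : 2 ≤ k)
    (hko : Odd k) : ¬ ∃ n : ℕ, 0 < n ∧ ngIter σ n = X := by
  rintro ⟨N, hN, hNX⟩
  obtain ⟨a, ha, b, hb, hab, heq⟩ :
      ∃ a ∈ Finset.range (N+1), ∃ b ∈ Finset.range (N+1), a ≠ b ∧ 2^a % N = 2^b % N := by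
    apply Finset.exists_ne_map_eq_of_card_lt_of_maps_to (t := Finset.range N)
    · simp
    · intro x _
      exact Finset.mem_range.mpr (Nat.mod_lt _ hN)
  -- wlog a < b
  wlog hlt : a < b generalizing a b
  · exact this b hb a ha (Ne.symm hab) heq.symm (by omega)
  have hle : 2^a ≤ 2^b := Nat.pow_le_pow_right (by norm_num) hlt.le
  have hdvd : N ∣ 2^b - 2^a := (Nat.modEq_iff_dvd' hle).mp heq
  obtain ⟨c, hc⟩ := hdvd
  have hsum : 2^b = 2^a + N * c := by omega
  have hiter : ngIter σ (2^b) = ngIter σ (2^a) := by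
    rw [hsum, ngIter_add hσ.1, ngIter_mul_X hσ.1 hNX c, ngComp_X]
  have hA := shape_iter hσ hk hko a
  have hB := shape_iter hσ hk hko b
  rw [hiter] at hB
  have hKa1 : 1 < 2 ^ a * (k - 1) + 1 := by
    have h1 : 1 ≤ 2 ^ a := Nat.one_le_two_pow
    have h2' : 1 ≤ k - 1 := by omega
    have : 1 ≤ 2 ^ a * (k-1) := Nat.one_le_iff_ne_zero.mpr (by positivity)
    omega
  have hKab : 2 ^ a * (k - 1) + 1 < 2 ^ b * (k - 1) + 1 := by
    have hp : 2 ^ a < 2 ^ b := Nat.pow_lt_pow_right (by norm_num) hlt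
    have h2' : 1 ≤ k - 1 := by omega
    have hm : 2 ^ a * (k-1) < 2 ^ b * (k-1) :=
      Nat.mul_lt_mul_of_pos_right hp (by omega)
    omega
  have h1 := hA.2.2.2
  have h0 := hB.2.2.1 _ hKa1 hKab
  rw [h1] at h0
  exact one_ne_zero h0

end NG


theorem statement10 :
    (∀ σ : PowerSeries F2, IsNott σ → σ ≠ PowerSeries.X →
      (∃ n : ℕ, 0 < n ∧ ngIter σ n = PowerSeries.X) →
      ∀ m : ℕ, HasDepth σ m → Odd m) ∧
    ∀ (σ : PowerSeries F2) (k : ℕ), IsNott σ → 2 ≤ k → Odd k →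
      (∀ i < k, PowerSeries.coeff (R := F2) i (σ - PowerSeries.X) = 0) →
      PowerSeries.coeff (R := F2) k (σ - PowerSeries.X) = 1 →
      (∀ n : ℕ, 1 ≤ n →
        (∀ i < 2 ^ n * (k - 1) + 1,
          PowerSeries.coeff (R := F2) i (ngIter σ (2 ^ n) - PowerSeries.X) = 0) ∧
        PowerSeries.coeff (R := F2) (2 ^ n * (k - 1) + 1) (ngIter σ (2 ^ n) - PowerSeries.X) = 1) ∧
      (∀ n : ℕ, 1 ≤ n → ngIter σ (2 ^ n) ≠ PowerSeries.X) ∧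
      ¬ ∃ n : ℕ, 0 < n ∧ ngIter σ n = PowerSeries.X := by
  have key : ∀ (σ : PowerSeries F2) (k : ℕ), IsNott σ → 2 ≤ k → Odd k →
      (∀ i < k, coeff (R := F2) i (σ - X) = 0) → coeff (R := F2) k (σ - X) = 1 →
      NG.Shape σ k := by
    intro σ k hN hk hko hlow hc
    have hXc : ∀ i, coeff (R := F2) i σ = coeff (R := F2) i (σ - X) + coeff (R := F2) i X := by
      intro i; rw [map_sub]; ring
    refine ⟨hN.1, hN.2, ?_, ?_⟩
    · intro i hi1 hik
      rw [hXc i, hlow i hik, coeff_X, if_neg (by omega)]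
      simp
    · rw [hXc k, hc, coeff_X, if_neg (by omega)]
      simp
  have main2 : ∀ (σ : PowerSeries F2) (k : ℕ), NG.Shape σ k → 2 ≤ k → Odd k →
      ∀ n : ℕ, (∀ i < 2 ^ n * (k - 1) + 1,
          coeff (R := F2) i (ngIter σ (2 ^ n) - X) = 0) ∧
        coeff (R := F2) (2 ^ n * (k - 1) + 1) (ngIter σ (2 ^ n) - X) = 1 := by
    intro σ k hsh hk hko n
    have hs := NG.shape_iter hsh hk hko n
    have hK1 : 1 < 2 ^ n * (k-1) + 1 := by
      have h1 : 1 ≤ 2 ^ n := Nat.one_le_two_pow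
      have h2 : 1 ≤ k - 1 := by omega
      have : 1 ≤ 2 ^ n * (k-1) := Nat.one_le_iff_ne_zero.mpr (by positivity)
      omega
    constructor
    · intro i hi
      rw [map_sub]
      rcases Nat.eq_zero_or_pos i with rfl | hi0
      · rw [hs.1, coeff_X, if_neg (by omega)]; simp
      rcases Nat.lt_or_ge i 2 with hi1 | hi2
      · rw [show i = 1 by omega, hs.2.1, coeff_X, if_pos rfl]; simp
      · rw [hs.2.2.1 i (by omega) hi, coeff_X, if_neg (by omega)]; simp
    · rw [map_sub, hs.2.2.2, coeff_X, if_neg (by omega)]; simp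
  constructor
  · intro σ hN hne hfin m hdep
    by_contra hodd
    rw [Nat.not_odd_iff_even] at hodd
    rcases Nat.eq_zero_or_pos m with rfl | hm
    · have h2 := hdep.2
      rw [map_sub, hN.2, coeff_X, if_pos rfl] at h2
      simp at h2
    · have hk2 : 2 ≤ m + 1 := by omega
      have hko : Odd (m+1) := Even.add_one hodd
      have h1 : coeff (R := F2) (m+1) (σ - X) = 1 := by
        have h2 := hdep.2
        have hall : ∀ a : F2, a ≠ 0 → a = 1 := by decide
        exact hall _ h2
      have hsh := key σ (m+1) hN hk2 hko hdep.1 h1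
      exact NG.no_finite_order hsh hk2 hko hfin
  · intro σ k hN hk hko hlow hc
    have hsh := key σ k hN hk hko hlow hc
    refine ⟨fun n _ => main2 σ k hsh hk hko n, fun n _ => ?_,
      NG.no_finite_order hsh hk hko⟩
    intro hX
    have h2 := (main2 σ k hsh hk hko n).2
    rw [hX] at h2
    simp at h2
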